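/- Let X be a finite ground set with |X| ≥ k ≥ 1, and let f : 2^X → ℝ be a monotone nondecreasing set function with f(∅) = 0. Suppose ε ≥ 0 satisfies f_j(T) − f_j(S) ≤ ε for all S ⊆ T ⊂ X and j ∈ X \ T, where f_j(S) = f(S ∪ {j}) − f(S). Let S_0 = ∅ and for i = 0, …, k−1 let S_{i+1} = S_i ∪ {j_i}, where j_i ∈ X \ S_i maximizes the marginal gain f_j(S_i) over j ∈ X \ S_i (greedy selection). Then f(S_k) ≥ (1 − 1/e) · (f(S*) − (k−1)·ε), where S* maximizes f over all subsets of X of cardinality at most k. -/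

import Mathlib

open Finset

/-- Greedy guarantee for monotone functions with additive
weak-submodularity bound `ε ≥ 0`: the greedy set of size `k` satisfies
`f(S_k) ≥ (1 − 1/e) · (f(S*) − (k−1)·ε)` where `S*` is an optimal subset of
cardinality at most `k`. -/
theorem stmt_4 {α : Type*} [Fintype α] [DecidableEq α]
    (f : Finset α → ℝ)
    (k : ℕ) (hk : 1 ≤ k) (hcard : k ≤ Fintype.card α)
    (hmono : ∀ S T : Finset α, S ⊆ T → f S ≤ f T)
    (hempty : f ∅ = 0)
    (ε : ℝ) (hε : 0 ≤ ε)
    (hweak : ∀ (S T : Finset α) (j : α), S ⊆ T → j ∉ T →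
      (f (insert j T) - f T) - (f (insert j S) - f S) ≤ ε)
    (Sseq : ℕ → Finset α) (jseq : ℕ → α)
    (hinit : Sseq 0 = ∅)
    (hgreedy : ∀ i < k,
      jseq i ∉ Sseq i ∧
      Sseq (i + 1) = insert (jseq i) (Sseq i) ∧
      ∀ j ∉ Sseq i,
        f (insert j (Sseq i)) - f (Sseq i) ≤
          f (insert (jseq i) (Sseq i)) - f (Sseq i))
    (Sstar : Finset α) (hstar_card : Sstar.card ≤ k)
    (hstar_opt : ∀ T : Finset α, T.card ≤ k → f T ≤ f Sstar) :
    (1 - 1 / Real.exp 1) * (f Sstar - ((k : ℝ) - 1) * ε) ≤ f (Sseq k) := by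
  have hk1 : (1:ℝ) ≤ (k:ℝ) := by exact_mod_cast hk
  have hkpos : (0:ℝ) < (k:ℝ) := by linarith
  set q : ℝ := 1 - 1 / (k : ℝ) with hq
  set c : ℝ := ((k:ℝ) - 1) * ε with hc
  have hq0 : 0 ≤ q := by
    have h1 : 1/(k:ℝ) ≤ 1 := by rw [div_le_one hkpos]; exact hk1
    simp only [hq]; linarith
  have hq' : q = ((k:ℝ) - 1) / k := by
    field_simp [hq]
    rw [hq, sub_mul, one_div, inv_mul_cancel₀ hkpos.ne', one_mul]
  -- telescoping lemma
  have haux : ∀ (S D : Finset α), Disjoint S D → D.Nonempty →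
      f (S ∪ D) ≤ f S + (∑ j ∈ D, (f (insert j S) - f S)) + ((D.card : ℝ) - 1) * ε := by
    intro S D
    induction D using Finset.induction_on with
    | empty => intro _ h; exact absurd h (by simp)
    | @insert a D' ha ih =>
      intro hdisj _
      have haS : a ∉ S := by
        intro h
        exact (Finset.disjoint_right.mp hdisj (Finset.mem_insert_self a D')) h
      have hdisj' : Disjoint S D' := hdisj.mono_right (Finset.subset_insert a D')
      rcases D'.eq_empty_or_nonempty with h0 | hne
      · subst h0
        have hrw : S ∪ insert a ∅ = insert a S := by ext x; simp [or_comm]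
        simp only [hrw, Finset.sum_insert (Finset.notMem_empty a), Finset.sum_empty,
          Finset.card_insert_of_notMem (Finset.notMem_empty a), Finset.card_empty]
        norm_num
      · have hih := ih hdisj' hne
        have haSD : a ∉ S ∪ D' := by simp [haS, ha]
        have hw := hweak S (S ∪ D') a (Finset.subset_union_left) haSD
        have hins : S ∪ insert a D' = insert a (S ∪ D') := by
          ext x; simp [or_comm, or_left_comm]
        rw [hins, Finset.sum_insert ha, Finset.card_insert_of_notMem ha]
        have hcard' : 1 ≤ D'.card := Finset.card_pos.mpr hne
        have : ((D'.card + 1 : ℕ) : ℝ) - 1 = ((D'.card : ℝ) - 1) + 1 := by push_cast; ring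
        rw [this]
        linarith
  -- per-step inequality
  have hstep : ∀ i < k,
      f Sstar - f (Sseq (i+1)) - c ≤ q * (f Sstar - f (Sseq i) - c) := by
    intro i hi
    obtain ⟨hj, hSi1, hmax⟩ := hgreedy i hi
    set S := Sseq i
    set g : ℝ := f (Sseq (i+1)) - f S with hg
    have hg0 : 0 ≤ g := by
      rw [hg, hSi1]
      have := hmono S (insert (jseq i) S) (Finset.subset_insert _ _)
      linarith
    have hkey : f Sstar - f S ≤ (k:ℝ) * g + c := by
      set D : Finset α := Sstar \ S with hD
      rcases D.eq_empty_or_nonempty with h0 | hne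
      · have hsub : Sstar ⊆ S := by
          rw [← Finset.sdiff_eq_empty_iff_subset]; exact h0
        have := hmono Sstar S hsub
        have hc0 : 0 ≤ c := mul_nonneg (by linarith) hε
        nlinarith [mul_nonneg hkpos.le hg0]
      · have hdisj : Disjoint S D := Finset.disjoint_sdiff
        have h1 : f Sstar ≤ f (S ∪ D) := by
          apply hmono
          intro x hx
          by_cases hxS : x ∈ S
          · exact Finset.mem_union_left _ hxS
          · exact Finset.mem_union_right _ (Finset.mem_sdiff.mpr ⟨hx, hxS⟩)
        have h2 := haux S D hdisj hne
        have h3 : (∑ j ∈ D, (f (insert j S) - f S)) ≤ (D.card : ℝ) * g := by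
          rw [hg, hSi1]
          calc (∑ j ∈ D, (f (insert j S) - f S))
              ≤ ∑ j ∈ D, (f (insert (jseq i) S) - f S) := by
                apply Finset.sum_le_sum
                intro j hjD
                exact hmax j (Finset.mem_sdiff.mp hjD).2
            _ = (D.card : ℝ) * (f (insert (jseq i) S) - f S) := by
                rw [Finset.sum_const, nsmul_eq_mul]
        have hDk : (D.card : ℝ) ≤ (k:ℝ) := by
          have : D.card ≤ Sstar.card := Finset.card_le_card (Finset.sdiff_subset)
          exact_mod_cast le_trans this hstar_card
        have h4 : (D.card : ℝ) * g ≤ (k:ℝ) * g := mul_le_mul_of_nonneg_right hDk hg0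
        have h5 : ((D.card : ℝ) - 1) * ε ≤ c := by
          rw [hc]
          apply mul_le_mul_of_nonneg_right _ hε
          linarith
        linarith
    have hkX : (k:ℝ) * (f Sstar - f (Sseq (i+1)) - c) ≤ ((k:ℝ) - 1) * (f Sstar - f S - c) := by
      have : f (Sseq (i+1)) = f S + g := by rw [hg]; ring
      rw [this]
      nlinarith
    calc f Sstar - f (Sseq (i+1)) - c
        = ((k:ℝ) * (f Sstar - f (Sseq (i+1)) - c)) / k := by field_simp
      _ ≤ (((k:ℝ) - 1) * (f Sstar - f S - c)) / k := by
          exact div_le_div_of_nonneg_right hkX hkpos.le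
      _ = q * (f Sstar - f S - c) := by rw [hq']; ring
  -- iterate
  have hiter : ∀ i ≤ k, f Sstar - f (Sseq i) - c ≤ q ^ i * (f Sstar - c) := by
    intro i
    induction i with
    | zero => intro _; simp [hinit, hempty]
    | succ n ihn =>
      intro hn
      have h1 := hstep n (by omega)
      have h2 := ihn (by omega)
      calc f Sstar - f (Sseq (n+1)) - c ≤ q * (f Sstar - f (Sseq n) - c) := h1
        _ ≤ q * (q ^ n * (f Sstar - c)) := mul_le_mul_of_nonneg_left h2 hq0
        _ = q ^ (n+1) * (f Sstar - c) := by ring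
  have hfinal := hiter k le_rfl
  -- q^k ≤ 1/e
  have hqe : q ^ k ≤ 1 / Real.exp 1 := by
    have h1 : q ≤ Real.exp (-(1/(k:ℝ))) := by
      have := Real.add_one_le_exp (-(1/(k:ℝ)))
      simp only [hq]; linarith
    have h2 : q ^ k ≤ Real.exp (-(1/(k:ℝ))) ^ k := pow_le_pow_left₀ hq0 h1 k
    have h3 : Real.exp (-(1/(k:ℝ))) ^ k = Real.exp ((k:ℝ) * (-(1/(k:ℝ)))) := by
      rw [Real.exp_nat_mul]
    have h4 : (k:ℝ) * (-(1/(k:ℝ))) = -1 := by field_simp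
    rw [h3, h4] at h2
    rw [Real.exp_neg] at h2
    rw [one_div]
    exact h2
  have hfk0 : 0 ≤ f (Sseq k) := by
    have := hmono ∅ (Sseq k) (Finset.empty_subset _)
    linarith [hempty ▸ this]
  have hepos : (1:ℝ) < Real.exp 1 := by
    have := Real.add_one_le_exp 1
    linarith
  have hq1e : 0 < 1 - 1 / Real.exp 1 := by
    have h0 : 0 < Real.exp 1 := Real.exp_pos 1
    have : 1 / Real.exp 1 < 1 := by rw [div_lt_one h0]; exact hepos
    linarith
  rcases le_or_gt 0 (f Sstar - c) with hE | hE
  · have h6 : (1 - 1/Real.exp 1) * (f Sstar - c) ≤ (1 - q^k) * (f Sstar - c) := by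
      apply mul_le_mul_of_nonneg_right _ hE
      linarith
    nlinarith
  · nlinarith
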